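/- Define u : ℝ⁴ × ℝ³ → ℝ by u(x, t) = ‖t‖ − (2/√3)‖x‖². Then at every point (x, t) with ‖x‖ > 0 and ‖t‖ = (2/√3)‖x‖², the horizontal mean curvature vanishes: H⁰ = 0. In other words, the hypersurface {(x,t) : ‖t‖ = √(4/3)·‖x‖²} is horizontally minimal away from the origin. -/

import Mathlib

set_option maxHeartbeats 1600000


open Set

/-- The horizontal vector fields `ξ₁, ξ₂, ξ₃, ξ₄` of the quaternionic Heisenberg
group, on `ℝ⁷ ≃ ℝ⁴ × ℝ³` with coordinates `(x₁,x₂,x₃,x₄,t₁,t₂,t₃)`. -/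
noncomputable def xiVF : Fin 4 → (Fin 7 → ℝ) → (Fin 7 → ℝ)
  | 0 => fun p => ![1, 0, 0, 0, 2 * p 1, 2 * p 2, 2 * p 3]
  | 1 => fun p => ![0, 1, 0, 0, -2 * p 0, -2 * p 3, 2 * p 2]
  | 2 => fun p => ![0, 0, 1, 0, 2 * p 3, -2 * p 0, -2 * p 1]
  | 3 => fun p => ![0, 0, 0, 1, -2 * p 2, 2 * p 1, -2 * p 0]

/-- The directional derivative `ξᵢ u` of a function `u` along `ξᵢ`. -/
noncomputable def xiD (i : Fin 4) (u : (Fin 7 → ℝ) → ℝ) (p : Fin 7 → ℝ) : ℝ :=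
  fderiv ℝ u p (xiVF i p)

/-- The norm of the horizontal gradient, `|∇₀u| = (Σᵢ (ξᵢu)²)^{1/2}`. -/
noncomputable def hGradNorm (u : (Fin 7 → ℝ) → ℝ) (p : Fin 7 → ℝ) : ℝ :=
  Real.sqrt (∑ i : Fin 4, (xiD i u p) ^ 2)

/-- The horizontal mean curvature `H⁰ = Σᵢ ξᵢ(ξᵢu / |∇₀u|)` of the level
hypersurface of `u`. -/
noncomputable def hMeanCurv (u : (Fin 7 → ℝ) → ℝ) (p : Fin 7 → ℝ) : ℝ :=
  ∑ i : Fin 4, xiD i (fun q => xiD i u q / hGradNorm u q) p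

/-- The horizontal radius `‖x‖ = (x₁²+x₂²+x₃²+x₄²)^{1/2}`. -/
noncomputable def nx (p : Fin 7 → ℝ) : ℝ :=
  Real.sqrt (p 0 ^ 2 + p 1 ^ 2 + p 2 ^ 2 + p 3 ^ 2)

/-- The vertical radius `‖t‖ = (t₁²+t₂²+t₃²)^{1/2}`. -/
noncomputable def nt (p : Fin 7 → ℝ) : ℝ :=
  Real.sqrt (p 4 ^ 2 + p 5 ^ 2 + p 6 ^ 2)

/-! ### Auxiliary machinery -/

lemma vec0 (a b c d e f g : ℝ) : ![a,b,c,d,e,f,g] (0 : Fin 7) = a := rfl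
lemma vec1 (a b c d e f g : ℝ) : ![a,b,c,d,e,f,g] (1 : Fin 7) = b := rfl
lemma vec2 (a b c d e f g : ℝ) : ![a,b,c,d,e,f,g] (2 : Fin 7) = c := rfl
lemma vec3 (a b c d e f g : ℝ) : ![a,b,c,d,e,f,g] (3 : Fin 7) = d := rfl
lemma vec4 (a b c d e f g : ℝ) : ![a,b,c,d,e,f,g] (4 : Fin 7) = e := rfl
lemma vec5 (a b c d e f g : ℝ) : ![a,b,c,d,e,f,g] (5 : Fin 7) = f := rfl
lemma vec6 (a b c d e f g : ℝ) : ![a,b,c,d,e,f,g] (6 : Fin 7) = g := rfl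

noncomputable def pr (j : Fin 7) : (Fin 7 → ℝ) →L[ℝ] ℝ := ContinuousLinearMap.proj j

lemma hpr (j : Fin 7) (q : Fin 7 → ℝ) : HasFDerivAt (fun q : Fin 7 → ℝ => q j) (pr j) q :=
  hasFDerivAt_apply j q

lemma hsq (j : Fin 7) (q : Fin 7 → ℝ) :
    HasFDerivAt (fun q : Fin 7 → ℝ => q j ^ 2) ((2 * q j) • pr j) q := by
  have hfun : (fun q : Fin 7 → ℝ => q j ^ 2) = fun q => q j * q j := by funext y; ring
  rw [hfun, show (2 * q j) • pr j = q j • pr j + q j • pr j by rw [two_mul, add_smul]]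
  exact (hpr j q).mul (hpr j q)

theorem myDiv {f g : (Fin 7 → ℝ) → ℝ} {f' g' : (Fin 7 → ℝ) →L[ℝ] ℝ} {x : Fin 7 → ℝ}
    (hf : HasFDerivAt f f' x) (hg : HasFDerivAt g g' x) (hx : g x ≠ 0) :
    HasFDerivAt (fun y => f y / g y) ((g x)⁻¹ • f' - (f x / g x ^ 2) • g') x := by
  have h := hf.mul ((hasDerivAt_inv hx).comp_hasFDerivAt x hg)
  have hfun : (fun y => f y / g y) = fun y => f y * ((fun z : ℝ => z⁻¹) ∘ g) y := by
    funext y; simp [div_eq_mul_inv, Function.comp]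
  have hclm : (g x)⁻¹ • f' - (f x / g x ^ 2) • g' = f x • (-(g x ^ 2)⁻¹ • g') + (g x)⁻¹ • f' := by
    ext v
    simp [smul_smul, div_eq_mul_inv]
    try ring
  rw [hfun, hclm]
  exact h

noncomputable def Sx (q : Fin 7 → ℝ) : ℝ := q 0 ^ 2 + q 1 ^ 2 + q 2 ^ 2 + q 3 ^ 2
noncomputable def Tt (q : Fin 7 → ℝ) : ℝ := q 4 ^ 2 + q 5 ^ 2 + q 6 ^ 2

noncomputable def Bq : Fin 4 → (Fin 7 → ℝ) → ℝ
  | 0 => fun q => 2 * q 1 * q 4 + 2 * q 2 * q 5 + 2 * q 3 * q 6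
  | 1 => fun q => -(2 * q 0 * q 4) - 2 * q 3 * q 5 + 2 * q 2 * q 6
  | 2 => fun q => 2 * q 3 * q 4 - 2 * q 0 * q 5 - 2 * q 1 * q 6
  | 3 => fun q => -(2 * q 2 * q 4) + 2 * q 1 * q 5 - 2 * q 0 * q 6

def ic : Fin 4 → Fin 7
  | 0 => 0
  | 1 => 1
  | 2 => 2
  | 3 => 3

noncomputable def Gf (i : Fin 4) (q : Fin 7 → ℝ) : ℝ :=
  (Bq i q / Real.sqrt (Tt q) - 4 / Real.sqrt 3 * q (ic i)) /
    (Real.sqrt (28 / 3) * Real.sqrt (Sx q))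

lemma vL : (0:ℝ) < Real.sqrt (28/3) := Real.sqrt_pos.mpr (by norm_num)
lemma v3 : (0:ℝ) < Real.sqrt 3 := Real.sqrt_pos.mpr (by norm_num)

lemma hsT (q : Fin 7 → ℝ) (hT : 0 < Tt q) :
    HasFDerivAt (fun q : Fin 7 → ℝ => Real.sqrt (Tt q))
      ((1 / (2 * Real.sqrt (Tt q))) •
        ((2 * q 4) • pr 4 + (2 * q 5) • pr 5 + (2 * q 6) • pr 6)) q := by
  have h := ((hsq 4 q).add (hsq 5 q)).add (hsq 6 q)
  exact (Real.hasDerivAt_sqrt hT.ne').comp_hasFDerivAt q h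

lemma hsS (q : Fin 7 → ℝ) (hS : 0 < Sx q) :
    HasFDerivAt (fun q : Fin 7 → ℝ => Real.sqrt (Sx q))
      ((1 / (2 * Real.sqrt (Sx q))) •
        ((2 * q 0) • pr 0 + (2 * q 1) • pr 1 + (2 * q 2) • pr 2 + (2 * q 3) • pr 3)) q := by
  have h := (((hsq 0 q).add (hsq 1 q)).add (hsq 2 q)).add (hsq 3 q)
  exact (Real.hasDerivAt_sqrt hS.ne').comp_hasFDerivAt q h

lemma xiDU (q : Fin 7 → ℝ) (hT : 0 < Tt q) (i : Fin 4) :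
    xiD i (fun q => nt q - 2 / Real.sqrt 3 * nx q ^ 2) q
      = Bq i q / Real.sqrt (Tt q) - 4 / Real.sqrt 3 * q (ic i) := by
  have hrw : (fun q : Fin 7 → ℝ => nt q - 2 / Real.sqrt 3 * nx q ^ 2)
      = fun q => Real.sqrt (Tt q) - 2 / Real.sqrt 3 * Sx q := by
    funext y
    have h2 : nx y ^ 2 = Sx y := Real.sq_sqrt (by positivity)
    have h1 : nt y = Real.sqrt (Tt y) := rfl
    rw [h2, h1]
  have hst : (0:ℝ) < Real.sqrt (Tt q) := Real.sqrt_pos.mpr hT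
  have hD : HasFDerivAt (fun q : Fin 7 → ℝ => Real.sqrt (Tt q) - 2 / Real.sqrt 3 * Sx q) _ q :=
    (hsT q hT).sub
      (((((hsq 0 q).add (hsq 1 q)).add (hsq 2 q)).add (hsq 3 q)).const_mul (2 / Real.sqrt 3))
  show fderiv ℝ _ q (xiVF i q) = _
  rw [hrw, hD.fderiv]
  have h3 := v3
  fin_cases i <;>
    · simp only [xiVF, Bq, ic, pr, ContinuousLinearMap.coe_sub', ContinuousLinearMap.coe_smul',
        Pi.sub_apply, Pi.smul_apply, ContinuousLinearMap.add_apply, ContinuousLinearMap.smul_apply,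
        ContinuousLinearMap.proj_apply, smul_eq_mul, vec0, vec1, vec2, vec3, vec4, vec5, vec6]
      field_simp
      ring

lemma gradU (q : Fin 7 → ℝ) (hT : 0 < Tt q) :
    hGradNorm (fun q => nt q - 2 / Real.sqrt 3 * nx q ^ 2) q
      = Real.sqrt (28 / 3) * Real.sqrt (Sx q) := by
  have hst : (0:ℝ) < Real.sqrt (Tt q) := Real.sqrt_pos.mpr hT
  have hst2 : Real.sqrt (Tt q) ^ 2 = Tt q := Real.sq_sqrt hT.le
  have h3 : Real.sqrt 3 ^ 2 = 3 := Real.sq_sqrt (by norm_num)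
  have h3p := v3
  rw [hGradNorm, Fin.sum_univ_four, xiDU q hT 0, xiDU q hT 1, xiDU q hT 2, xiDU q hT 3]
  have key : (Bq 0 q / Real.sqrt (Tt q) - 4 / Real.sqrt 3 * q (ic 0)) ^ 2
      + (Bq 1 q / Real.sqrt (Tt q) - 4 / Real.sqrt 3 * q (ic 1)) ^ 2
      + (Bq 2 q / Real.sqrt (Tt q) - 4 / Real.sqrt 3 * q (ic 2)) ^ 2
      + (Bq 3 q / Real.sqrt (Tt q) - 4 / Real.sqrt 3 * q (ic 3)) ^ 2
      = 28 / 3 * Sx q := by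
    have hst2' : Real.sqrt (Tt q) ^ 2 = q 4 ^ 2 + q 5 ^ 2 + q 6 ^ 2 := hst2
    simp only [Bq, ic, Sx]
    set st := Real.sqrt (Tt q) with hstd
    set s3 := Real.sqrt 3 with hs3d
    field_simp
    linear_combination ((-12) * s3 ^ 2 * (q 0 ^ 2 + q 1 ^ 2 + q 2 ^ 2 + q 3 ^ 2)) * hst2'
      + ((-16) * st ^ 2 * (q 0 ^ 2 + q 1 ^ 2 + q 2 ^ 2 + q 3 ^ 2)) * h3
  rw [key, Real.sqrt_mul (by norm_num : (0:ℝ) ≤ 28/3)]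

lemma keyG (i : Fin 4) (q : Fin 7 → ℝ) (hT : 0 < Tt q) (hS : 0 < Sx q) :
    ∃ D : (Fin 7 → ℝ) →L[ℝ] ℝ, HasFDerivAt (Gf i) D q ∧
      D (xiVF i q) =
        ((4 * (Real.sqrt (Sx q) ^ 2 - q (ic i) ^ 2) * Real.sqrt (Tt q)
            - Bq i q ^ 2 / Real.sqrt (Tt q)) / Real.sqrt (Tt q) ^ 2
          - 4 / Real.sqrt 3) / (Real.sqrt (28 / 3) * Real.sqrt (Sx q))
        - (Bq i q / Real.sqrt (Tt q) - 4 / Real.sqrt 3 * q (ic i)) * q (ic i)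
            / (Real.sqrt (28 / 3) * Real.sqrt (Sx q) ^ 2 * Real.sqrt (Sx q)) := by
  have hst : (0:ℝ) < Real.sqrt (Tt q) := Real.sqrt_pos.mpr hT
  have hss : (0:ℝ) < Real.sqrt (Sx q) := Real.sqrt_pos.mpr hS
  have h3p := v3
  have hLp := vL
  have hden : HasFDerivAt (fun q : Fin 7 → ℝ => Real.sqrt (28 / 3) * Real.sqrt (Sx q)) _ q :=
    (hsS q hS).const_mul (Real.sqrt (28 / 3))
  have hdenne : Real.sqrt (28 / 3) * Real.sqrt (Sx q) ≠ 0 := by positivity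
  fin_cases i
  · refine ⟨_, myDiv ((myDiv
      (((((hpr 1 q).const_mul 2).mul (hpr 4 q)).add
        ((((hpr 2 q).const_mul 2).mul (hpr 5 q)))).add
          ((((hpr 3 q).const_mul 2).mul (hpr 6 q)))) (hsT q hT) hst.ne').sub
      ((hpr 0 q).const_mul (4 / Real.sqrt 3))) hden hdenne, ?_⟩
    simp only [xiVF, Bq, ic, pr, ContinuousLinearMap.coe_sub', ContinuousLinearMap.coe_smul',
      Pi.sub_apply, Pi.smul_apply, ContinuousLinearMap.add_apply, ContinuousLinearMap.sub_apply,
      ContinuousLinearMap.smul_apply, ContinuousLinearMap.proj_apply, smul_eq_mul,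
      vec0, vec1, vec2, vec3, vec4, vec5, vec6]
    set st := Real.sqrt (Tt q) with hstd
    set ss := Real.sqrt (Sx q) with hssd
    set s3 := Real.sqrt 3 with hs3d
    set L := Real.sqrt (28/3) with hLd
    have hss2 : ss ^ 2 = q 0 ^ 2 + q 1 ^ 2 + q 2 ^ 2 + q 3 ^ 2 := Real.sq_sqrt hS.le
    simp only [Pi.mul_apply, Pi.add_apply, Pi.neg_apply, Pi.sub_apply]
    field_simp
    linear_combination (-4 * ss ^ 2 * s3 * st ^ 2) * hss2
  · refine ⟨_, myDiv ((myDiv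
      ((((((hpr 0 q).const_mul 2).mul (hpr 4 q)).neg).sub
        ((((hpr 3 q).const_mul 2).mul (hpr 5 q)))).add
          ((((hpr 2 q).const_mul 2).mul (hpr 6 q)))) (hsT q hT) hst.ne').sub
      ((hpr 1 q).const_mul (4 / Real.sqrt 3))) hden hdenne, ?_⟩
    simp only [xiVF, Bq, ic, pr, ContinuousLinearMap.coe_sub', ContinuousLinearMap.coe_smul',
      Pi.sub_apply, Pi.smul_apply, ContinuousLinearMap.add_apply, ContinuousLinearMap.sub_apply,
      ContinuousLinearMap.neg_apply, ContinuousLinearMap.smul_apply,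
      ContinuousLinearMap.proj_apply, smul_eq_mul,
      vec0, vec1, vec2, vec3, vec4, vec5, vec6]
    set st := Real.sqrt (Tt q) with hstd
    set ss := Real.sqrt (Sx q) with hssd
    set s3 := Real.sqrt 3 with hs3d
    set L := Real.sqrt (28/3) with hLd
    have hss2 : ss ^ 2 = q 0 ^ 2 + q 1 ^ 2 + q 2 ^ 2 + q 3 ^ 2 := Real.sq_sqrt hS.le
    simp only [Pi.mul_apply, Pi.add_apply, Pi.neg_apply, Pi.sub_apply]
    field_simp
    linear_combination (-4 * ss ^ 2 * s3 * st ^ 2) * hss2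
  · refine ⟨_, myDiv ((myDiv
      ((((((hpr 3 q).const_mul 2).mul (hpr 4 q))).sub
        ((((hpr 0 q).const_mul 2).mul (hpr 5 q)))).sub
          ((((hpr 1 q).const_mul 2).mul (hpr 6 q)))) (hsT q hT) hst.ne').sub
      ((hpr 2 q).const_mul (4 / Real.sqrt 3))) hden hdenne, ?_⟩
    simp only [xiVF, Bq, ic, pr, ContinuousLinearMap.coe_sub', ContinuousLinearMap.coe_smul',
      Pi.sub_apply, Pi.smul_apply, ContinuousLinearMap.add_apply, ContinuousLinearMap.sub_apply,
      ContinuousLinearMap.neg_apply, ContinuousLinearMap.smul_apply,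
      ContinuousLinearMap.proj_apply, smul_eq_mul,
      vec0, vec1, vec2, vec3, vec4, vec5, vec6]
    set st := Real.sqrt (Tt q) with hstd
    set ss := Real.sqrt (Sx q) with hssd
    set s3 := Real.sqrt 3 with hs3d
    set L := Real.sqrt (28/3) with hLd
    have hss2 : ss ^ 2 = q 0 ^ 2 + q 1 ^ 2 + q 2 ^ 2 + q 3 ^ 2 := Real.sq_sqrt hS.le
    simp only [Pi.mul_apply, Pi.add_apply, Pi.neg_apply, Pi.sub_apply]
    field_simp
    linear_combination (-4 * ss ^ 2 * s3 * st ^ 2) * hss2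
  · refine ⟨_, myDiv ((myDiv
      ((((((hpr 2 q).const_mul 2).mul (hpr 4 q)).neg).add
        ((((hpr 1 q).const_mul 2).mul (hpr 5 q)))).sub
          ((((hpr 0 q).const_mul 2).mul (hpr 6 q)))) (hsT q hT) hst.ne').sub
      ((hpr 3 q).const_mul (4 / Real.sqrt 3))) hden hdenne, ?_⟩
    simp only [xiVF, Bq, ic, pr, ContinuousLinearMap.coe_sub', ContinuousLinearMap.coe_smul',
      Pi.sub_apply, Pi.smul_apply, ContinuousLinearMap.add_apply, ContinuousLinearMap.sub_apply,
      ContinuousLinearMap.neg_apply, ContinuousLinearMap.smul_apply,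
      ContinuousLinearMap.proj_apply, smul_eq_mul,
      vec0, vec1, vec2, vec3, vec4, vec5, vec6]
    set st := Real.sqrt (Tt q) with hstd
    set ss := Real.sqrt (Sx q) with hssd
    set s3 := Real.sqrt 3 with hs3d
    set L := Real.sqrt (28/3) with hLd
    have hss2 : ss ^ 2 = q 0 ^ 2 + q 1 ^ 2 + q 2 ^ 2 + q 3 ^ 2 := Real.sq_sqrt hS.le
    simp only [Pi.mul_apply, Pi.add_apply, Pi.neg_apply, Pi.sub_apply]
    field_simp
    linear_combination (-4 * ss ^ 2 * s3 * st ^ 2) * hss2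

lemma alg (s3 st ss L x0 x1 x2 x3 b0 b1 b2 b3 : ℝ)
    (hs3 : s3 ^ 2 = 3) (hs3p : 0 < s3) (hstp : 0 < st) (hssp : 0 < ss) (hLp : 0 < L)
    (hBB : b0 ^ 2 + b1 ^ 2 + b2 ^ 2 + b3 ^ 2
      = 4 * (x0 ^ 2 + x1 ^ 2 + x2 ^ 2 + x3 ^ 2) * st ^ 2)
    (hXB : x0 * b0 + x1 * b1 + x2 * b2 + x3 * b3 = 0)
    (hS : x0 ^ 2 + x1 ^ 2 + x2 ^ 2 + x3 ^ 2 = ss ^ 2)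
    (hsurf : st = 2 / s3 * ss ^ 2) :
    ((4 * (ss ^ 2 - x0 ^ 2) * st - b0 ^ 2 / st) / st ^ 2 - 4 / s3) / (L * ss)
      - (b0 / st - 4 / s3 * x0) * x0 / (L * ss ^ 2 * ss)
    + (((4 * (ss ^ 2 - x1 ^ 2) * st - b1 ^ 2 / st) / st ^ 2 - 4 / s3) / (L * ss)
      - (b1 / st - 4 / s3 * x1) * x1 / (L * ss ^ 2 * ss))
    + (((4 * (ss ^ 2 - x2 ^ 2) * st - b2 ^ 2 / st) / st ^ 2 - 4 / s3) / (L * ss)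
      - (b2 / st - 4 / s3 * x2) * x2 / (L * ss ^ 2 * ss))
    + (((4 * (ss ^ 2 - x3 ^ 2) * st - b3 ^ 2 / st) / st ^ 2 - 4 / s3) / (L * ss)
      - (b3 / st - 4 / s3 * x3) * x3 / (L * ss ^ 2 * ss)) = 0 := by
  have hsurf2 : s3 * st = 2 * ss ^ 2 := by rw [hsurf]; field_simp
  field_simp
  linear_combination (-(st^2*s3)) * hXB + (-(ss^2*s3)) * hBB
    + (4*st^3 - 8*ss^2*s3*st^2) * hS + (-4*ss^2*st^2*s3) * hsurf2
    + (4*ss^2*st^3) * hs3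

/-- The hypersurface `‖t‖ = √(4/3)·‖x‖²`, the zero level set of
`u(x,t) = ‖t‖ − (2/√3)‖x‖²`, is horizontally minimal away from the origin: its
horizontal mean curvature vanishes at every point with `‖x‖ > 0` and
`‖t‖ = (2/√3)‖x‖²`. -/
theorem horizontally_minimal_paraboloid
    (p : Fin 7 → ℝ) (hx : 0 < nx p)
    (ht : nt p = 2 / Real.sqrt 3 * nx p ^ 2) :
    hMeanCurv (fun q => nt q - 2 / Real.sqrt 3 * nx q ^ 2) p = 0 := by
  have hSp : 0 < Sx p := Real.sqrt_pos.mp hx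
  have hntp : 0 < nt p := by
    rw [ht]; exact mul_pos (div_pos two_pos v3) (pow_pos hx 2)
  have hTp : 0 < Tt p := Real.sqrt_pos.mp hntp
  have hss : (0:ℝ) < Real.sqrt (Sx p) := hx
  have hst : (0:ℝ) < Real.sqrt (Tt p) := hntp
  have hTcont : Continuous Tt := by unfold Tt; fun_prop
  have hev : ∀ᶠ q in nhds p, 0 < Tt q :=
    hTcont.continuousAt.eventually (eventually_gt_nhds hTp)
  have hterm : ∀ i : Fin 4,
      xiD i (fun q => xiD i (fun q' => nt q' - 2 / Real.sqrt 3 * nx q' ^ 2) q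
        / hGradNorm (fun q' => nt q' - 2 / Real.sqrt 3 * nx q' ^ 2) q) p
      = fderiv ℝ (Gf i) p (xiVF i p) := by
    intro i
    have hfe : fderiv ℝ (fun q => xiD i (fun q' => nt q' - 2 / Real.sqrt 3 * nx q' ^ 2) q
        / hGradNorm (fun q' => nt q' - 2 / Real.sqrt 3 * nx q' ^ 2) q) p
        = fderiv ℝ (Gf i) p := by
      apply Filter.EventuallyEq.fderiv_eq
      refine hev.mono fun q hq => ?_
      show xiD i (fun q' => nt q' - 2 / Real.sqrt 3 * nx q' ^ 2) q
        / hGradNorm (fun q' => nt q' - 2 / Real.sqrt 3 * nx q' ^ 2) q = Gf i q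
      rw [xiDU q hq i, gradU q hq]
      rfl
    show fderiv ℝ _ p (xiVF i p) = _
    rw [hfe]
  unfold hMeanCurv
  rw [Fin.sum_univ_four, hterm 0, hterm 1, hterm 2, hterm 3]
  obtain ⟨D0, hD0, hv0⟩ := keyG 0 p hTp hSp
  obtain ⟨D1, hD1, hv1⟩ := keyG 1 p hTp hSp
  obtain ⟨D2, hD2, hv2⟩ := keyG 2 p hTp hSp
  obtain ⟨D3, hD3, hv3⟩ := keyG 3 p hTp hSp
  rw [hD0.fderiv, hD1.fderiv, hD2.fderiv, hD3.fderiv, hv0, hv1, hv2, hv3]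
  simp only [ic]
  have hs3 : Real.sqrt 3 ^ 2 = 3 := Real.sq_sqrt (by norm_num)
  have hBB : Bq 0 p ^ 2 + Bq 1 p ^ 2 + Bq 2 p ^ 2 + Bq 3 p ^ 2
      = 4 * (p 0 ^ 2 + p 1 ^ 2 + p 2 ^ 2 + p 3 ^ 2) * Real.sqrt (Tt p) ^ 2 := by
    rw [Real.sq_sqrt hTp.le]
    simp only [Bq, Tt]
    ring
  have hXB : p 0 * Bq 0 p + p 1 * Bq 1 p + p 2 * Bq 2 p + p 3 * Bq 3 p = 0 := by
    simp only [Bq]; ring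
  have hS' : p 0 ^ 2 + p 1 ^ 2 + p 2 ^ 2 + p 3 ^ 2 = Real.sqrt (Sx p) ^ 2 := by
    rw [Real.sq_sqrt hSp.le]; rfl
  have hsurf : Real.sqrt (Tt p) = 2 / Real.sqrt 3 * Real.sqrt (Sx p) ^ 2 := ht
  exact alg (Real.sqrt 3) (Real.sqrt (Tt p)) (Real.sqrt (Sx p)) (Real.sqrt (28/3))
    (p 0) (p 1) (p 2) (p 3) (Bq 0 p) (Bq 1 p) (Bq 2 p) (Bq 3 p)
    hs3 v3 hst hss vL hBB hXB hS' hsurf
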